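/- Let m ≥ 1, let λ, τ be real numbers, let M be an m×m matrix of differentiable real-valued functions of a real variable c, and let μ⃗ : ℝ → ℝ^m be componentwise differentiable and satisfy M(c)·μ⃗(c) = (λ + τc)·c·μ⃗'(c) for all c. Let μ : ℕ → (ℝ → ℝ) be a sequence of differentiable functions with μ₀(c) equal to the first component of μ⃗(c) and μ_{n+1}(c) = c·μ_n'(c) for all n ∈ ℕ and all c. Let P⃗ : ℕ → (ℝ → ℝ^m) be a sequence of componentwise differentiable vector functions with P⃗₀(c) = e₀ (the first standard basis vector) for all c, and P⃗_{n+1}(c) = c(λ + τc)·P⃗_n'(c) + (M(c)ᵀ − nτc·I)·P⃗_n(c) for all n and c, where I is the m×m identity matrix. Then for every n ∈ ℕ and every real c with λ + τc ≠ 0, μ_n(c) = (λ + τc)^{−n} · ⟨P⃗_n(c), μ⃗(c)⟩, where ⟨·,·⟩ is the standard dot product on ℝ^m. -/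

import Mathlib

open Matrix

/-- Proposition 2.1 (main result). If the moment vector satisfies
`M(c) ⬝ μ⃗(c) = (λ + τc)·c·μ⃗'(c)`, the moments satisfy `μ_{n+1} = c μ_n'` with
`μ_0` the first component of `μ⃗`, and the vector polynomials `P⃗_n` satisfy the
differential-difference recurrence, then
`μ_n(c) = (λ + τc)^{-n} ⟨P⃗_n(c), μ⃗(c)⟩` whenever `λ + τc ≠ 0`. -/
theorem moments_eq_polynomial_combination
    (m : ℕ) (hm : 1 ≤ m) (lam tau : ℝ)
    (M : ℝ → Matrix (Fin m) (Fin m) ℝ)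
    (hM : ∀ i j : Fin m, Differentiable ℝ fun c => M c i j)
    (muv : ℝ → Fin m → ℝ)
    (hmuv : ∀ i : Fin m, Differentiable ℝ fun c => muv c i)
    (hMmu : ∀ (c : ℝ) (i : Fin m),
      (M c *ᵥ muv c) i = (lam + tau * c) * c * deriv (fun t => muv t i) c)
    (mu : ℕ → ℝ → ℝ)
    (hmud : ∀ n, Differentiable ℝ (mu n))
    (hmu0 : ∀ c : ℝ, mu 0 c = muv c ⟨0, hm⟩)
    (hmurec : ∀ (n : ℕ) (c : ℝ), mu (n + 1) c = c * deriv (mu n) c)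
    (P : ℕ → ℝ → Fin m → ℝ)
    (hPd : ∀ (n : ℕ) (i : Fin m), Differentiable ℝ fun c => P n c i)
    (hP0 : ∀ (c : ℝ) (i : Fin m), P 0 c i = if i = ⟨0, hm⟩ then 1 else 0)
    (hPrec : ∀ (n : ℕ) (c : ℝ) (i : Fin m),
      P (n + 1) c i =
        c * (lam + tau * c) * deriv (fun t => P n t i) c +
          (((M c)ᵀ *ᵥ P n c) i - (n : ℝ) * tau * c * P n c i)) :
    ∀ (n : ℕ) (c : ℝ), lam + tau * c ≠ 0 →
      mu n c = (lam + tau * c) ^ (-(n : ℤ)) * (P n c ⬝ᵥ muv c) := by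

  intro n
  induction n with
  | zero =>
    intro c hc
    simp [hmu0, dotProduct, hP0]
  | succ n ih =>
    intro c hc
    have hopen : ∀ᶠ t in nhds c, lam + tau * t ≠ 0 := by
      have hcont : ContinuousAt (fun t : ℝ => lam + tau * t) c := by fun_prop
      exact hcont.eventually_ne hc
    have hEq : mu n =ᶠ[nhds c]
        fun t => (lam + tau * t) ^ (-(n : ℤ)) * (P n t ⬝ᵥ muv t) := by
      filter_upwards [hopen] with t ht using ih t ht
    have hlin : HasDerivAt (fun t : ℝ => lam + tau * t) tau c := by
      simpa using ((hasDerivAt_id c).const_mul tau).const_add lam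
    have hpow : HasDerivAt (fun t => (lam + tau * t) ^ (-(n : ℤ)))
        ((-(n : ℤ)) * (lam + tau * c) ^ (-(n : ℤ) - 1) * tau) c :=
      by
      have h0 := (hasDerivAt_zpow (-(n : ℤ)) (lam + tau * c) (Or.inl hc)).comp c hlin
      simpa [Function.comp_def, mul_comm, mul_assoc, mul_left_comm] using h0
    have hdot : HasDerivAt (fun t => P n t ⬝ᵥ muv t)
        (∑ i, (deriv (fun t => P n t i) c * muv c i +
          P n c i * deriv (fun t => muv t i) c)) c := by
      simp only [dotProduct]
      exact HasDerivAt.fun_sum fun i _ =>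
        ((hPd n i).differentiableAt.hasDerivAt.mul
          (hmuv i).differentiableAt.hasDerivAt)
    have hg : HasDerivAt
        (fun t => (lam + tau * t) ^ (-(n : ℤ)) * (P n t ⬝ᵥ muv t))
        ((-(n : ℤ)) * (lam + tau * c) ^ (-(n : ℤ) - 1) * tau * (P n c ⬝ᵥ muv c)
          + (lam + tau * c) ^ (-(n : ℤ)) *
            (∑ i, (deriv (fun t => P n t i) c * muv c i +
              P n c i * deriv (fun t => muv t i) c))) c := hpow.mul hdot
    have hDeriv : deriv (mu n) c =
        (-(n : ℤ)) * (lam + tau * c) ^ (-(n : ℤ) - 1) * tau * (P n c ⬝ᵥ muv c)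
          + (lam + tau * c) ^ (-(n : ℤ)) *
            (∑ i, (deriv (fun t => P n t i) c * muv c i +
              P n c i * deriv (fun t => muv t i) c)) := by
      rw [hEq.deriv_eq]; exact hg.deriv
    -- dot product identities
    have hMT : ((M c)ᵀ *ᵥ P n c) ⬝ᵥ muv c =
        (lam + tau * c) * c * ∑ i, P n c i * deriv (fun t => muv t i) c := by
      have h1 : ((M c)ᵀ *ᵥ P n c) ⬝ᵥ muv c = P n c ⬝ᵥ (M c *ᵥ muv c) := by
        rw [Matrix.dotProduct_mulVec, Matrix.mulVec_transpose]
      rw [h1]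
      simp only [dotProduct, hMmu, Finset.mul_sum]
      exact Finset.sum_congr rfl fun i _ => by ring
    have hkey : P (n + 1) c ⬝ᵥ muv c =
        c * (lam + tau * c) * (∑ i, deriv (fun t => P n t i) c * muv c i)
          + (lam + tau * c) * c * (∑ i, P n c i * deriv (fun t => muv t i) c)
          - (n : ℝ) * tau * c * (P n c ⬝ᵥ muv c) := by
      have : P (n + 1) c ⬝ᵥ muv c =
          ∑ i, (c * (lam + tau * c) * deriv (fun t => P n t i) c * muv c i
            + (((M c)ᵀ *ᵥ P n c) i * muv c i
              - (n : ℝ) * tau * c * (P n c i * muv c i))) := by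
        simp only [dotProduct, hPrec]
        exact Finset.sum_congr rfl fun i _ => by ring
      rw [this, Finset.sum_add_distrib, Finset.sum_sub_distrib]
      have e1 : ∑ i, c * (lam + tau * c) * deriv (fun t => P n t i) c * muv c i
          = c * (lam + tau * c) * ∑ i, deriv (fun t => P n t i) c * muv c i := by
        rw [Finset.mul_sum]
        exact Finset.sum_congr rfl fun i _ => by ring
      have e2 : ∑ i, ((M c)ᵀ *ᵥ P n c) i * muv c i
          = (lam + tau * c) * c * ∑ i, P n c i * deriv (fun t => muv t i) c := by
        simpa [dotProduct] using hMT
      have e3 : ∑ i, (n : ℝ) * tau * c * (P n c i * muv c i)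
          = (n : ℝ) * tau * c * (P n c ⬝ᵥ muv c) := by
        rw [dotProduct, Finset.mul_sum]
      rw [e1, e2, e3]; ring
    rw [hmurec, hDeriv, hkey]
    have hz1 : (lam + tau * c) ^ (-(n : ℤ)) = ((lam + tau * c) ^ n)⁻¹ := by
      rw [_root_.zpow_neg, zpow_natCast]
    have hz2 : (lam + tau * c) ^ (-(n : ℤ) - 1) = ((lam + tau * c) ^ (n + 1))⁻¹ := by
      have : -(n : ℤ) - 1 = -(((n + 1 : ℕ) : ℤ)) := by push_cast; ring
      rw [this, _root_.zpow_neg, zpow_natCast]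
    have hz3 : (lam + tau * c) ^ (-((n + 1 : ℕ) : ℤ)) = ((lam + tau * c) ^ (n + 1))⁻¹ := by
      rw [_root_.zpow_neg, zpow_natCast]
    rw [hz1, hz2, hz3, Finset.sum_add_distrib]
    have hpn : (lam + tau * c) ^ n ≠ 0 := pow_ne_zero _ hc
    have hpn1 : (lam + tau * c) ^ (n + 1) ≠ 0 := pow_ne_zero _ hc
    push_cast
    generalize lam + tau * c = x at *
    field_simp
    ring
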